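/- If m ∈ {1,...,n-1} and A is a Borel set contained in an m-dimensional affine subspace of ℝⁿ, then ℋ^m(A)² equals the sum, over all m-dimensional coordinate subspaces S of ℝⁿ, of ℋ^m(A|S)², where A|S denotes the orthogonal projection of A onto S. -/

import Mathlib

open MeasureTheory Finset Pointwise
open scoped ENNReal NNReal

noncomputable def ballVolume (k : ℕ) : ℝ :=
  (volume (Metric.ball (0 : EuclideanSpace ℝ (Fin k)) 1)).toReal

/-- The Steiner polynomial of a compact convex set `K ⊆ ℝⁿ`, recovered by Lagrange
interpolation of `t ↦ vol(K + t Bⁿ)` at `t = 0, 1, …, n`. -/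
noncomputable def steinerPoly (n : ℕ) (K : Set (EuclideanSpace ℝ (Fin n))) : Polynomial ℝ :=
  Lagrange.interpolate (Finset.range (n + 1)) (fun j => (j : ℝ))
    (fun j => (volume (K + Metric.closedBall (0 : EuclideanSpace ℝ (Fin n)) (j : ℝ))).toReal)

/-- The `m`-th intrinsic volume `V_m(K)`, via the Steiner formula
`vol(K + t Bⁿ) = ∑_m κ_{n-m} V_m(K) t^{n-m}`. -/
noncomputable def intrinsicVolume (n m : ℕ) (K : Set (EuclideanSpace ℝ (Fin n))) : ℝ :=
  (steinerPoly n K).coeff (n - m) / ballVolume (n - m)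

/-- Orthogonal projection of a subset of `ℝⁿ` onto the coordinate hyperplane `eᵢ^⊥`. -/
noncomputable def coordProj {n : ℕ} (i : Fin n) (A : Set (EuclideanSpace ℝ (Fin n))) :
    Set (EuclideanSpace ℝ (Fin n)) :=
  (fun x => x - x i • EuclideanSpace.single i 1) '' A

/-- Orthogonal projection of a subset of `ℝⁿ` onto the coordinate subspace
spanned by the `eᵢ`, `i ∈ s`. -/
noncomputable def coordSubspaceProj {n : ℕ} (s : Finset (Fin n))
    (A : Set (EuclideanSpace ℝ (Fin n))) : Set (EuclideanSpace ℝ (Fin n)) :=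
  (fun x => (WithLp.toLp 2 (fun j => if j ∈ s then x j else 0) : EuclideanSpace ℝ (Fin n))) '' A

open Matrix Equiv Function

section CB
variable {R : Type*} [CommRing R] {m n : ℕ}

/-- The increasing enumeration of an `m`-element subset of `Fin n`. -/
noncomputable def embF {n m : ℕ} (s : {s : Finset (Fin n) // s.card = m}) : Fin m → Fin n :=
  fun i => s.1.orderEmbOfFin s.2 i

theorem det_sum_aux {A : Matrix (Fin m) (Fin n) R} {B : Matrix (Fin n) (Fin m) R}
    {p : Fin m → Fin n} (H : ¬Injective p) :
    (∑ σ : Perm (Fin m), Equiv.Perm.sign σ • ∏ x, A (σ x) (p x) * B (p x) x) = 0 := by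
  obtain ⟨i, j, hpij, hij⟩ : ∃ i j, p i = p j ∧ i ≠ j := by
    rw [Injective] at H
    push_neg at H
    obtain ⟨i, j, h1, h2⟩ := H
    exact ⟨i, j, h1, h2⟩
  exact
    sum_involution (fun σ _ => σ * Equiv.swap i j)
      (fun σ _ => by
        have : (∏ x, A (σ x) (p x)) = ∏ x, A ((σ * Equiv.swap i j) x) (p x) :=
          Fintype.prod_equiv (Equiv.swap i j) _ _ (by simp [Equiv.apply_swap_eq_self hpij])
        simp [this, Equiv.Perm.sign_swap hij, -Equiv.Perm.sign_swap', prod_mul_distrib])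
      (fun σ _ _ => (not_congr Equiv.mul_swap_eq_iff).mpr hij) (fun _ _ => mem_univ _)
      fun σ _ => Equiv.mul_swap_involutive i j σ

/-- expansion of `det (A * B)` as sum over functions -/
theorem det_mul_expand (A : Matrix (Fin m) (Fin m) R) (B : Matrix (Fin m) (Fin m) R) :
    det (A * B) = ∑ τ : Perm (Fin m), ∑ σ : Perm (Fin m),
      Equiv.Perm.sign σ • ∏ i, A (σ i) (τ i) * B (τ i) i := by
  calc
    det (A * B) = ∑ p : Fin m → Fin m, ∑ σ : Perm (Fin m),
        Equiv.Perm.sign σ • ∏ i, A (σ i) (p i) * B (p i) i := by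
      simp only [det_apply, mul_apply, prod_univ_sum, smul_sum, Fintype.piFinset_univ]
      rw [Finset.sum_comm]
    _ = ∑ p : Fin m → Fin m with Bijective p, ∑ σ : Perm (Fin m),
        Equiv.Perm.sign σ • ∏ i, A (σ i) (p i) * B (p i) i := by
      refine (sum_subset (filter_subset _ _) fun f _ hbij ↦ ?_).symm
      have : ¬Injective f := by
        rw [Finite.injective_iff_bijective]
        simpa only [true_and, mem_filter, mem_univ] using hbij
      exact det_sum_aux this
    _ = ∑ τ : Perm (Fin m), ∑ σ : Perm (Fin m),
        Equiv.Perm.sign σ • ∏ i, A (σ i) (τ i) * B (τ i) i :=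
      sum_bij (fun p h ↦ Equiv.ofBijective p (mem_filter.1 h).2) (fun _ _ ↦ mem_univ _)
        (fun _ _ _ _ h ↦ by injection h)
        (fun b _ ↦ ⟨b, mem_filter.2 ⟨mem_univ _, b.bijective⟩, Equiv.coe_fn_injective rfl⟩)
        fun _ _ ↦ rfl

noncomputable def permOf {n m : ℕ} (s : Finset (Fin n)) (h : s.card = m) (p : Fin m → Fin n)
    (hp : Injective p) (him : Finset.univ.image p = s) : Perm (Fin m) :=
  Equiv.ofBijective
    (fun i => (s.orderIsoOfFin h).symm
      ⟨p i, him ▸ Finset.mem_image_of_mem p (Finset.mem_univ i)⟩)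
    (by
      rw [← Finite.injective_iff_bijective]
      intro a b hab
      have := congrArg (fun z => ((s.orderIsoOfFin h) z : Fin n)) hab
      simp only [OrderIso.apply_symm_apply] at this
      exact hp this)

theorem embF_permOf {n m : ℕ} (s : Finset (Fin n)) (h : s.card = m) (p : Fin m → Fin n)
    (hp : Injective p) (him : Finset.univ.image p = s) (i : Fin m) :
    s.orderEmbOfFin h (permOf s h p hp him i) = p i := by
  simp only [permOf, Equiv.ofBijective_apply]
  rw [← Finset.coe_orderIsoOfFin_apply, OrderIso.apply_symm_apply]

/-- **Cauchy–Binet formula**. -/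
theorem cauchy_binet (A : Matrix (Fin m) (Fin n) R) (B : Matrix (Fin n) (Fin m) R) :
    det (A * B) = ∑ s : {s : Finset (Fin n) // s.card = m},
      det (A.submatrix id (embF s)) * det (B.submatrix (embF s) id) := by
  classical
  have step1 : det (A * B) = ∑ p : Fin m → Fin n, ∑ σ : Perm (Fin m),
      Equiv.Perm.sign σ • ∏ i, A (σ i) (p i) * B (p i) i := by
    simp only [det_apply, mul_apply, prod_univ_sum, smul_sum, Fintype.piFinset_univ]
    rw [Finset.sum_comm]
  have step2 : det (A * B) = ∑ p : Fin m → Fin n with Injective p, ∑ σ : Perm (Fin m),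
      Equiv.Perm.sign σ • ∏ i, A (σ i) (p i) * B (p i) i := by
    rw [step1]
    refine (sum_subset (filter_subset _ _) fun f _ hinj ↦ ?_).symm
    have : ¬Injective f := by simpa only [true_and, mem_filter, mem_univ] using hinj
    exact det_sum_aux this
  rw [step2]
  have step3 : ∀ s : {s : Finset (Fin n) // s.card = m},
      det (A.submatrix id (embF s)) * det (B.submatrix (embF s) id)
        = ∑ τ : Perm (Fin m), ∑ σ : Perm (Fin m),
            Equiv.Perm.sign σ • ∏ i, A (σ i) (embF s (τ i)) * B (embF s (τ i)) i := by
    intro s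
    rw [← det_mul, det_mul_expand]
    rfl
  simp only [step3]
  -- fiber the injective functions over their image
  trans ∑ t ∈ Finset.univ.filter (fun t : Finset (Fin n) => t.card = m),
      ∑ p ∈ (Finset.univ.filter (fun p : Fin m → Fin n => Injective p)).filter
          (fun p => Finset.univ.image p = t),
        ∑ σ : Perm (Fin m), Equiv.Perm.sign σ • ∏ i, A (σ i) (p i) * B (p i) i
  · rw [← Finset.sum_fiberwise (Finset.univ.filter (fun p : Fin m → Fin n => Injective p))
        (fun p => Finset.univ.image p)
        (fun p => ∑ σ : Perm (Fin m), Equiv.Perm.sign σ • ∏ i, A (σ i) (p i) * B (p i) i)]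
    refine (Finset.sum_subset (Finset.filter_subset _ Finset.univ) ?_).symm
    intro t _ ht
    simp only [mem_filter, mem_univ, true_and] at ht
    refine Finset.sum_eq_zero fun p hp => absurd ?_ ht
    simp only [mem_filter, mem_univ, true_and] at hp
    rw [← hp.2, Finset.card_image_of_injective _ hp.1, card_univ, Fintype.card_fin]
  rw [Finset.sum_subtype (p := fun t : Finset (Fin n) => t.card = m)
      (Finset.univ.filter (fun t : Finset (Fin n) => t.card = m))
      (fun t => by simp)]
  refine Finset.sum_congr rfl fun s _ => ?_
  -- now a clean bijection with permutations, for fixed `s`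
  have hmem : ∀ i, embF s i ∈ s.1 := fun i => Finset.orderEmbOfFin_mem s.1 s.2 i
  have hinj : Injective (embF s) := fun a b hab => (s.1.orderEmbOfFin s.2).injective hab
  have himg : ∀ τ : Perm (Fin m), Finset.univ.image (embF s ∘ τ) = s.1 := by
    intro τ
    apply Finset.eq_of_subset_of_card_le
    · intro j hj
      simp only [Finset.mem_image] at hj
      obtain ⟨i, _, rfl⟩ := hj
      exact hmem _
    · rw [Finset.card_image_of_injective _ (hinj.comp τ.injective), card_univ,
        Fintype.card_fin, s.2]
  refine Finset.sum_bij'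
    (fun p hp => permOf s.1 s.2 p (Finset.mem_filter.1 (Finset.mem_filter.1 hp).1).2
      (Finset.mem_filter.1 hp).2)
    (fun τ _ => embF s ∘ τ) (fun p hp => Finset.mem_univ _) ?c1 ?c2 ?c3 ?c4
  case c1 =>
    intro τ _
    simp only [Finset.mem_filter, Finset.mem_univ, true_and]
    exact ⟨hinj.comp τ.injective, himg τ⟩
  case c2 =>
    intro p hp
    funext i
    exact embF_permOf s.1 s.2 p _ _ i
  case c3 =>
    intro τ _
    refine Equiv.ext fun i => ?_
    have h1 := embF_permOf s.1 s.2 (embF s ∘ τ) (hinj.comp τ.injective) (himg τ) i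
    exact hinj h1
  case c4 =>
    intro p hp
    refine Finset.sum_congr rfl fun σ _ => ?_
    congr 1
    refine Finset.prod_congr rfl fun i _ => ?_
    simp only [embF, embF_permOf]

/-- Isometric inclusion of `ℝᵐ` as the coordinate subspace spanned by `s`. -/
noncomputable def coordIso {n m : ℕ} (s : Finset (Fin n)) (h : s.card = m) :
    EuclideanSpace ℝ (Fin m) →ₗᵢ[ℝ] EuclideanSpace ℝ (Fin n) where
  toFun := fun y => (WithLp.toLp 2 (fun j => if hj : j ∈ s then y ((s.orderIsoOfFin h).symm ⟨j, hj⟩) else 0) :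
    EuclideanSpace ℝ (Fin n))
  map_add' := by
    intro x y
    ext j
    by_cases hj : j ∈ s <;> simp [hj, PiLp.add_apply]
  map_smul' := by
    intro c x
    ext j
    by_cases hj : j ∈ s <;> simp [hj, PiLp.smul_apply]
  norm_map' := by
    intro y
    rw [EuclideanSpace.norm_eq, EuclideanSpace.norm_eq]
    congr 1
    calc ∑ j : Fin n, ‖(if hj : j ∈ s then y ((s.orderIsoOfFin h).symm ⟨j, hj⟩) else 0)‖ ^ 2
        = ∑ j ∈ s, ‖(if hj : j ∈ s then y ((s.orderIsoOfFin h).symm ⟨j, hj⟩) else 0)‖ ^ 2 := by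
          refine (Finset.sum_subset (Finset.subset_univ s) fun j _ hj => ?_).symm
          simp [hj]
      _ = ∑ j : {x // x ∈ s}, ‖y ((s.orderIsoOfFin h).symm j)‖ ^ 2 := by
          rw [← Finset.sum_coe_sort]
          refine Finset.sum_congr rfl fun j _ => ?_
          rw [dif_pos j.2]
      _ = ∑ k : Fin m, ‖y k‖ ^ 2 :=
          Fintype.sum_equiv (s.orderIsoOfFin h).toEquiv.symm _ _ (fun j => rfl)


end CB

/-- **Generalized Pythagorean theorem (Cauchy–Binet).**
If `1 ≤ m ≤ n-1` and `A` is a Borel set contained in an `m`-dimensional affine subspace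
of `ℝⁿ`, then `ℋ^m(A)²` equals the sum of `ℋ^m(A|S)²` over all `m`-dimensional
coordinate subspaces `S`. -/
theorem stmt1 (n m : ℕ) (hm : 1 ≤ m) (hmn : m ≤ n - 1) (hn : 1 ≤ n)
    (A : Set (EuclideanSpace ℝ (Fin n))) (hA : MeasurableSet A)
    (S : AffineSubspace ℝ (EuclideanSpace ℝ (Fin n)))
    (hS : Module.finrank ℝ S.direction = m) (hAS : (A : Set _) ⊆ S) :
    (μH[(m : ℝ)] A) ^ 2 =
      ∑ s ∈ Finset.univ.filter (fun s : Finset (Fin n) => s.card = m),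
        (μH[(m : ℝ)] (coordSubspaceProj s A)) ^ 2 := by
  classical
  have hm0 : (0:ℝ) ≤ (m:ℝ) := by positivity
  -- Haar instance for the Hausdorff measure on `ℝᵐ`
  haveI hHaar : (μH[(m : ℝ)] :
      Measure (EuclideanSpace ℝ (Fin m))).IsAddHaarMeasure := by
    have h := MeasureTheory.isAddHaarMeasure_hausdorffMeasure
      (E := EuclideanSpace ℝ (Fin m))
    simpa [finrank_euclideanSpace_fin] using h
  -- a base point of `S`
  have hSne : (S : Set (EuclideanSpace ℝ (Fin n))).Nonempty := by
    rw [AffineSubspace.nonempty_iff_ne_bot]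
    intro hbot
    rw [hbot, AffineSubspace.direction_bot, finrank_bot] at hS
    omega
  obtain ⟨p₀, hp₀⟩ := hSne
  set D := S.direction with hDdef
  have hD : Module.finrank ℝ D = m := hS
  haveI : FiniteDimensional ℝ D := inferInstance
  let ob : OrthonormalBasis (Fin m) ℝ D :=
    (stdOrthonormalBasis ℝ D).reindex (finCongr hD)
  let L : EuclideanSpace ℝ (Fin m) →ₗᵢ[ℝ] EuclideanSpace ℝ (Fin n) :=
    D.subtypeₗᵢ.comp ob.repr.symm.toLinearIsometry
  have hLmem : ∀ x, L x ∈ D := fun x => (ob.repr.symm x).2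
  have hLsur : ∀ v ∈ D, ∃ x, L x = v := fun v hv =>
    ⟨ob.repr ⟨v, hv⟩, by simp [L]⟩
  set f : EuclideanSpace ℝ (Fin m) → EuclideanSpace ℝ (Fin n) :=
    fun x => p₀ + L x with hfdef
  have hfiso : Isometry f := by
    refine Isometry.of_dist_eq fun x y => ?_
    rw [hfdef]
    simp only [dist_add_left]
    exact L.isometry.dist_eq x y
  set E := f ⁻¹' A with hEdef
  have hArange : A ⊆ Set.range f := by
    intro a ha
    obtain ⟨x, hx⟩ := hLsur (a - p₀)
      (AffineSubspace.vsub_mem_direction (hAS ha) hp₀)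
    exact ⟨x, by simp [hfdef, hx]⟩
  have hAE : f '' E = A := Set.image_preimage_eq_of_subset hArange
  have hμA : μH[(m : ℝ)] A = μH[(m : ℝ)] E := by
    rw [← hAE, hfiso.hausdorffMeasure_image (Or.inl hm0)]
  -- the matrix of L
  set Bmat : Matrix (Fin n) (Fin m) ℝ :=
    (fun j i => L (EuclideanSpace.single i 1) j) with hBdef
  have hLx : ∀ (x : EuclideanSpace ℝ (Fin m)) (j : Fin n),
      L x j = ∑ i, Bmat j i * x i := by
    intro x j
    have hx : x = ∑ i, x i • EuclideanSpace.single i (1:ℝ) := by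
      have := (EuclideanSpace.basisFun (Fin m) ℝ).toBasis.sum_repr x
      simpa [EuclideanSpace.basisFun_apply] using this.symm
    conv_lhs => rw [hx]
    rw [map_sum]
    have : (∑ i, L (x i • EuclideanSpace.single i (1:ℝ))) j
        = ∑ i, (L (x i • EuclideanSpace.single i (1:ℝ))) j :=
      by rw [WithLp.ofLp_sum, Finset.sum_apply]
    rw [this]
    refine Finset.sum_congr rfl fun i _ => ?_
    rw [_root_.map_smul]
    simp [hBdef, mul_comm]
  have hBcol : Bmatᵀ * Bmat = 1 := by
    ext i i'
    have h1 := L.inner_map_map (EuclideanSpace.single i (1:ℝ))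
      (EuclideanSpace.single i' (1:ℝ))
    simp only [PiLp.inner_apply, RCLike.inner_apply, starRingEnd_apply, star_trivial,
      EuclideanSpace.inner_single_left, EuclideanSpace.single_apply, one_mul] at h1
    rw [Matrix.mul_apply]
    simp only [Matrix.transpose_apply, Matrix.one_apply]
    simp only [hBdef]
    rw [show (∑ x, (L (EuclideanSpace.single i (1:ℝ))) x * (L (EuclideanSpace.single i' (1:ℝ))) x) = ∑ x, (L (EuclideanSpace.single i' (1:ℝ))) x * (L (EuclideanSpace.single i (1:ℝ))) x from Finset.sum_congr rfl fun _ _ => mul_comm _ _]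
    rw [h1]
    by_cases hii : i = i' <;> simp [hii, eq_comm]
  -- measure of each coordinate projection
  have hproj : ∀ s : {s : Finset (Fin n) // s.card = m},
      μH[(m : ℝ)] (coordSubspaceProj s.1 A)
        = ENNReal.ofReal |(Bmat.submatrix (embF s) id).det| * μH[(m : ℝ)] E := by
    intro s
    set N : Matrix (Fin m) (Fin m) ℝ := Bmat.submatrix (embF s) id with hN
    set Mlin : EuclideanSpace ℝ (Fin m) →ₗ[ℝ] EuclideanSpace ℝ (Fin m) :=
      Matrix.toEuclideanLin N with hMlin
    set c : EuclideanSpace ℝ (Fin n) :=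
      (WithLp.toLp 2 (fun j => if j ∈ s.1 then p₀ j else 0) : EuclideanSpace ℝ (Fin n)) with hc
    have hMapp : ∀ (x : EuclideanSpace ℝ (Fin m)) (k : Fin m),
        Mlin x k = ∑ i, N k i * x i := by
      intro x k
      rfl
    have hpt : ∀ x : EuclideanSpace ℝ (Fin m),
        (WithLp.toLp 2 (fun j => if j ∈ s.1 then (f x) j else 0) : EuclideanSpace ℝ (Fin n))
          = c + coordIso s.1 s.2 (Mlin x) := by
      intro x
      ext j
      have hadd : (c + coordIso s.1 s.2 (Mlin x)) j
          = c j + coordIso s.1 s.2 (Mlin x) j := rfl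
      rw [hadd, WithLp.ofLp_toLp]
      by_cases hj : j ∈ s.1
      · have hco : coordIso s.1 s.2 (Mlin x) j
            = Mlin x ((s.1.orderIsoOfFin s.2).symm ⟨j, hj⟩) := dif_pos hj
        have hcj : c j = p₀ j := if_pos hj
        have hfx : f x j = p₀ j + L x j := rfl
        rw [if_pos hj, hcj, hco, hfx]
        congr 1
        rw [hMapp, hLx x j]
        refine Finset.sum_congr rfl fun i _ => ?_
        congr 1
        show Bmat j i = Bmat (embF s ((s.1.orderIsoOfFin s.2).symm ⟨j, hj⟩)) i
        congr 1
        have h3 : embF s ((s.1.orderIsoOfFin s.2).symm ⟨j, hj⟩)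
            = ((s.1.orderIsoOfFin s.2) ((s.1.orderIsoOfFin s.2).symm ⟨j, hj⟩) : Fin n) :=
          (Finset.coe_orderIsoOfFin_apply s.1 s.2 _).symm
        rw [h3, OrderIso.apply_symm_apply]
      · have hco : coordIso s.1 s.2 (Mlin x) j = 0 := dif_neg hj
        have hcj : c j = 0 := if_neg hj
        rw [if_neg hj, hcj, hco, add_zero]
    have h1 : coordSubspaceProj s.1 A
        = (fun y => c + y) '' ((coordIso s.1 s.2) '' (Mlin '' E)) := by
      rw [coordSubspaceProj, ← hAE, Set.image_image, Set.image_image, Set.image_image]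
      exact Set.image_congr fun x _ => hpt x
    rw [h1]
    have h2 : (fun y => c + y) '' ((coordIso s.1 s.2) '' (Mlin '' E))
        = c +ᵥ ((coordIso s.1 s.2) '' (Mlin '' E)) := by
      rw [← Set.image_vadd]
      rfl
    rw [h2, MeasureTheory.hausdorffMeasure_vadd c (Or.inl hm0),
      (coordIso s.1 s.2).isometry.hausdorffMeasure_image (Or.inl hm0),
      MeasureTheory.Measure.addHaar_image_linearMap _ Mlin E]
    congr 2
    rw [hMlin, Matrix.toEuclideanLin_eq_toLin, LinearMap.det_toLin]
  -- Cauchy–Binet gives the sum of squared determinants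
  have hsumCB : ∑ s : {s : Finset (Fin n) // s.card = m},
      (Bmat.submatrix (embF s) id).det ^ 2 = 1 := by
    have hcb := cauchy_binet Bmatᵀ Bmat
    rw [hBcol, Matrix.det_one] at hcb
    rw [hcb]
    refine Finset.sum_congr rfl fun s _ => ?_
    have : Bmatᵀ.submatrix id (embF s) = (Bmat.submatrix (embF s) id)ᵀ := by
      rw [Matrix.transpose_submatrix]
    rw [this, Matrix.det_transpose, sq]
  -- put everything together
  rw [Finset.sum_subtype (p := fun t : Finset (Fin n) => t.card = m)
      (Finset.univ.filter (fun t : Finset (Fin n) => t.card = m)) (fun t => by simp)]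
  rw [hμA]
  calc (μH[(m:ℝ)] E) ^ 2
      = ENNReal.ofReal (∑ s : {s : Finset (Fin n) // s.card = m},
          (Bmat.submatrix (embF s) id).det ^ 2) * (μH[(m:ℝ)] E) ^ 2 := by
        rw [hsumCB, ENNReal.ofReal_one, one_mul]
    _ = (∑ s : {s : Finset (Fin n) // s.card = m},
          ENNReal.ofReal ((Bmat.submatrix (embF s) id).det ^ 2)) * (μH[(m:ℝ)] E) ^ 2 := by
        rw [ENNReal.ofReal_sum_of_nonneg fun s _ => sq_nonneg _]
    _ = ∑ s : {s : Finset (Fin n) // s.card = m},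
          ENNReal.ofReal ((Bmat.submatrix (embF s) id).det ^ 2) * (μH[(m:ℝ)] E) ^ 2 := by
        rw [Finset.sum_mul]
    _ = ∑ s : {s : Finset (Fin n) // s.card = m},
          (μH[(m:ℝ)] (coordSubspaceProj s.1 A)) ^ 2 := by
        refine Finset.sum_congr rfl fun s _ => ?_
        rw [hproj s, mul_pow, ← ENNReal.ofReal_pow (abs_nonneg _), sq_abs]
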